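/- arXiv:2407.00080 — 3 statements merged into one kernel-verified Lean document; each statement's English description precedes it below -/
import Mathlib

section
/- For every R ≥ 0 and every f ≥ 0, the magnitude of the derivative of f ↦ Q(R,f) is bounded: |∂Q(R,f)/∂f| ≤ L, where L = (1/(√(2π)·σ_s·Z)) · m·d_max·F·B·R·(c·B·R + F) / (ρ·ν·F)². -/
open Real MeasureTheory Set

noncomputable def xfun (B F c ρ ν dmax : ℝ) (m : ℕ) (R f : ℝ) : ℝ :=
  dmax * F * B * R / (m * f * (c * B * R + F) + ρ * ν * F)

/-- CDF of the normal distribution N(μs, σs²). -/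
noncomputable def normCDF (μs σs : ℝ) (y : ℝ) : ℝ :=
  ∫ t in Set.Iic y, (1 / (Real.sqrt (2 * Real.pi) * σs)) * Real.exp (-(t - μs) ^ 2 / (2 * σs ^ 2))

noncomputable def Qfun (B F c ρ ν dmax : ℝ) (m : ℕ) (μs σs sa sb : ℝ) (R f : ℝ) : ℝ :=
  (normCDF μs σs (xfun B F c ρ ν dmax m R f) - normCDF μs σs sa) /
    (normCDF μs σs sb - normCDF μs σs sa)

noncomputable def gaussD (μs σs t : ℝ) : ℝ :=
  (1 / (Real.sqrt (2 * Real.pi) * σs)) * Real.exp (-(t - μs) ^ 2 / (2 * σs ^ 2))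

lemma gaussD_cont (μs σs : ℝ) : Continuous (gaussD μs σs) := by
  unfold gaussD; fun_prop

lemma gaussD_pos (μs : ℝ) {σs : ℝ} (hσ : 0 < σs) (t : ℝ) : 0 < gaussD μs σs t := by
  unfold gaussD
  have h1 : 0 < Real.sqrt (2 * Real.pi) := Real.sqrt_pos.mpr (by positivity)
  positivity

lemma gaussD_le (μs : ℝ) {σs : ℝ} (hσ : 0 < σs) (t : ℝ) :
    gaussD μs σs t ≤ 1 / (Real.sqrt (2 * Real.pi) * σs) := by
  unfold gaussD
  have h1 : 0 < Real.sqrt (2 * Real.pi) := Real.sqrt_pos.mpr (by positivity)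
  have h2 : Real.exp (-(t - μs) ^ 2 / (2 * σs ^ 2)) ≤ 1 := by
    rw [Real.exp_le_one_iff]; exact div_nonpos_of_nonpos_of_nonneg (neg_nonpos.mpr (sq_nonneg _)) (by positivity)
  calc (1 / (Real.sqrt (2 * Real.pi) * σs)) * Real.exp (-(t - μs) ^ 2 / (2 * σs ^ 2))
      ≤ (1 / (Real.sqrt (2 * Real.pi) * σs)) * 1 := by
        apply mul_le_mul_of_nonneg_left h2 (by positivity)
    _ = 1 / (Real.sqrt (2 * Real.pi) * σs) := mul_one _

lemma gaussD_integrable (μs : ℝ) {σs : ℝ} (hσ : 0 < σs) : Integrable (gaussD μs σs) := by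
  have h : Integrable (fun t : ℝ => Real.exp (-(1 / (2 * σs ^ 2)) * t ^ 2)) :=
    integrable_exp_neg_mul_sq (by positivity)
  have h2 := (h.comp_sub_right μs).const_mul (1 / (Real.sqrt (2 * Real.pi) * σs))
  convert h2 using 2 with t
  unfold gaussD
  ring_nf

lemma normCDF_sub (μs : ℝ) {σs : ℝ} (hσ : 0 < σs) (a b : ℝ) :
    normCDF μs σs b - normCDF μs σs a = ∫ t in a..b, gaussD μs σs t := by
  have : normCDF μs σs b - normCDF μs σs a
      = (∫ t in Set.Iic b, gaussD μs σs t) - ∫ t in Set.Iic a, gaussD μs σs t := rfl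
  rw [this, intervalIntegral.integral_Iic_sub_Iic ((gaussD_integrable μs hσ).integrableOn)
    ((gaussD_integrable μs hσ).integrableOn)]

lemma normCDF_hasDerivAt (μs : ℝ) {σs : ℝ} (hσ : 0 < σs) (y : ℝ) :
    HasDerivAt (normCDF μs σs) (gaussD μs σs y) y := by
  have key : ∀ z, normCDF μs σs z = (∫ t in (0:ℝ)..z, gaussD μs σs t) + normCDF μs σs 0 := by
    intro z
    rw [← normCDF_sub μs hσ 0 z]; ring
  have h : HasDerivAt (fun z => (∫ t in (0:ℝ)..z, gaussD μs σs t) + normCDF μs σs 0)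
      (gaussD μs σs y) y := by
    apply HasDerivAt.add_const
    exact intervalIntegral.integral_hasDerivAt_right
      ((gaussD_integrable μs hσ).intervalIntegrable)
      ((gaussD_cont μs σs).aestronglyMeasurable.stronglyMeasurableAtFilter)
      (gaussD_cont μs σs).continuousAt
  exact h.congr_deriv rfl |>.congr_of_eventuallyEq (Filter.Eventually.of_forall key) |>.congr_deriv rfl

lemma Z_pos (μs : ℝ) {σs sa sb : ℝ} (hσ : 0 < σs) (hab : sa < sb) :
    0 < normCDF μs σs sb - normCDF μs σs sa := by
  rw [normCDF_sub μs hσ]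
  exact intervalIntegral.intervalIntegral_pos_of_pos
    ((gaussD_integrable μs hσ).intervalIntegrable) (gaussD_pos μs hσ) hab

theorem stmt3 (B F c ρ ν dmax : ℝ) (m : ℕ)
    (hB : 0 < B) (hF : 0 < F) (hc : 0 < c) (hρ : 0 < ρ) (hν : 0 < ν) (hd : 0 < dmax)
    (hm : 0 < m) (μs σs sa sb : ℝ) (hσ : 0 < σs) (hsa : 0 < sa) (hab : sa < sb)
    (R f : ℝ) (hR : 0 ≤ R) (hf : 0 ≤ f) :
    |deriv (fun f' => Qfun B F c ρ ν dmax m μs σs sa sb R f') f| ≤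
      (1 / (Real.sqrt (2 * Real.pi) * σs * (normCDF μs σs sb - normCDF μs σs sa))) *
        (m * dmax * F * B * R * (c * B * R + F) / (ρ * ν * F) ^ 2) := by
  set Z := normCDF μs σs sb - normCDF μs σs sa with hZdef
  have hZ : 0 < Z := Z_pos μs hσ hab
  set S := Real.sqrt (2 * Real.pi) with hSdef
  have hS : 0 < S := Real.sqrt_pos.mpr (by positivity)
  set A := dmax * F * B * R with hAdef
  set K := (m : ℝ) * (c * B * R + F) with hKdef
  set D := ρ * ν * F with hDdef
  have hA : 0 ≤ A := by positivity
  have hK : 0 < K := by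
    have : (0:ℝ) < m := Nat.cast_pos.mpr hm
    positivity
  have hD : 0 < D := by positivity
  have hgf : 0 < K * f + D := by positivity
  have hxeq : ∀ f', xfun B F c ρ ν dmax m R f' = A / (K * f' + D) := by
    intro f'
    unfold xfun
    rw [hAdef, hKdef, hDdef]
    congr 1
    ring
  have hg : HasDerivAt (fun f' : ℝ => K * f' + D) K f := by
    simpa using ((hasDerivAt_id f).const_mul K).add_const D
  have hx : HasDerivAt (fun f' => xfun B F c ρ ν dmax m R f') (-(A * K) / (K * f + D) ^ 2) f := by
    have h := (hasDerivAt_const f A).div hg (ne_of_gt hgf)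
    have h2 : (0 * (K * f + D) - A * K) / (K * f + D) ^ 2 = -(A * K) / (K * f + D) ^ 2 := by ring
    rw [h2] at h
    exact h.congr_of_eventuallyEq (Filter.Eventually.of_forall hxeq)
  set xf := xfun B F c ρ ν dmax m R f with hxf
  have hQ : HasDerivAt (fun f' => Qfun B F c ρ ν dmax m μs σs sa sb R f')
      ((gaussD μs σs xf * (-(A * K) / (K * f + D) ^ 2)) / Z) f := by
    have h1 := ((normCDF_hasDerivAt μs hσ xf).comp f hx).sub_const (normCDF μs σs sa)
    exact h1.div_const Z
  rw [hQ.deriv]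
  have hgauss := gaussD_pos μs hσ xf
  have hxfabs : |gaussD μs σs xf * (-(A * K) / (K * f + D) ^ 2) / Z|
      = gaussD μs σs xf * (A * K / (K * f + D) ^ 2) / Z := by
    rw [abs_div, abs_of_pos hZ, abs_mul, abs_of_pos hgauss, abs_div, abs_neg,
      abs_of_nonneg (by positivity : (0:ℝ) ≤ A * K), abs_of_pos (by positivity : (0:ℝ) < (K * f + D) ^ 2)]
  rw [hxfabs]
  have hrhs : (1 / (S * σs * Z)) * ((m : ℝ) * dmax * F * B * R * (c * B * R + F) / D ^ 2)
      = ((1 / (S * σs)) * (A * K / D ^ 2)) / Z := by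
    rw [hAdef, hKdef]
    field_simp
  rw [hrhs]
  gcongr
  · exact gaussD_le μs hσ xf
  · exact le_add_of_nonneg_left (mul_nonneg hK.le hf)
end

section
/- For every R ≥ 0, the function f ↦ Q(R,f) is Lipschitz continuous on [0,1] with Lipschitz constant L = (1/(√(2π)·σ_s·Z)) · m·d_max·F·B·R·(c·B·R + F) / (ρ·ν·F)²; that is, for all f, f' ∈ [0,1], |Q(R,f) − Q(R,f')| ≤ L·|f − f'|. -/
open Real MeasureTheory Set

lemma gauss_integrable (μs σs : ℝ) (hσ : 0 < σs) :
    Integrable (fun t : ℝ =>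
      (1 / (Real.sqrt (2 * Real.pi) * σs)) * Real.exp (-(t - μs) ^ 2 / (2 * σs ^ 2))) := by
  have hb : 0 < 1 / (2 * σs ^ 2) := by positivity
  have h1 : Integrable (fun t : ℝ => Real.exp (-(1 / (2 * σs ^ 2)) * t ^ 2)) :=
    integrable_exp_neg_mul_sq hb
  have h2 := h1.comp_sub_right μs
  have h3 : (fun t : ℝ => Real.exp (-(1 / (2 * σs ^ 2)) * (t - μs) ^ 2)) =
      fun t : ℝ => Real.exp (-(t - μs) ^ 2 / (2 * σs ^ 2)) := by
    funext t; ring_nf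
  rw [h3] at h2
  exact h2.const_mul _

lemma normCDF_diff (μs σs : ℝ) (hσ : 0 < σs) (y z : ℝ) :
    normCDF μs σs z - normCDF μs σs y =
      ∫ t in y..z,
        (1 / (Real.sqrt (2 * Real.pi) * σs)) * Real.exp (-(t - μs) ^ 2 / (2 * σs ^ 2)) := by
  have hi := gauss_integrable μs σs hσ
  exact intervalIntegral.integral_Iic_sub_Iic hi.integrableOn hi.integrableOn

lemma normCDF_lip (μs σs : ℝ) (hσ : 0 < σs) (y z : ℝ) :
    |normCDF μs σs z - normCDF μs σs y| ≤ (1 / (Real.sqrt (2 * Real.pi) * σs)) * |z - y| := by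
  set C := 1 / (Real.sqrt (2 * Real.pi) * σs) with hC
  have hCpos : 0 < C := by
    have : 0 < Real.sqrt (2 * Real.pi) := Real.sqrt_pos.mpr (by positivity)
    positivity
  have key : ∀ a b : ℝ, a ≤ b →
      normCDF μs σs b - normCDF μs σs a ≤ C * (b - a) ∧
      0 ≤ normCDF μs σs b - normCDF μs σs a := by
    intro a b hab
    rw [normCDF_diff μs σs hσ a b, intervalIntegral.integral_of_le hab]
    have hi := (gauss_integrable μs σs hσ).integrableOn (s := Ioc a b)
    constructor
    · calc ∫ t in Ioc a b, C * Real.exp (-(t - μs) ^ 2 / (2 * σs ^ 2))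
          ≤ ∫ _ in Ioc a b, C := by
            refine setIntegral_mono_on hi ((integrableOn_const_iff).mpr (Or.inr ?_)) measurableSet_Ioc ?_
            · rw [Real.volume_Ioc]; exact ENNReal.ofReal_lt_top
            · intro t _
              have : Real.exp (-(t - μs) ^ 2 / (2 * σs ^ 2)) ≤ 1 := by
                rw [Real.exp_le_one_iff, neg_div]
                have : 0 ≤ (t - μs) ^ 2 / (2 * σs ^ 2) := by positivity
                linarith
              nlinarith
        _ = C * (b - a) := by
            rw [setIntegral_const, measureReal_def, Real.volume_Ioc, ENNReal.toReal_ofReal (by linarith),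
              smul_eq_mul]
            ring
    · refine setIntegral_nonneg measurableSet_Ioc fun t _ => ?_
      positivity
  rcases le_total y z with h | h
  · obtain ⟨h1, h2⟩ := key y z h
    rw [abs_of_nonneg h2, abs_of_nonneg (by linarith)]
    exact h1
  · obtain ⟨h1, h2⟩ := key z y h
    rw [abs_sub_comm, abs_sub_comm z y, abs_of_nonneg h2, abs_of_nonneg (by linarith)]
    exact h1

lemma normCDF_Zpos (μs σs sa sb : ℝ) (hσ : 0 < σs) (hab : sa < sb) :
    0 < normCDF μs σs sb - normCDF μs σs sa := by
  rw [normCDF_diff μs σs hσ sa sb]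
  have hcont : Continuous (fun t : ℝ =>
      (1 / (Real.sqrt (2 * Real.pi) * σs)) * Real.exp (-(t - μs) ^ 2 / (2 * σs ^ 2))) := by
    continuity
  refine intervalIntegral.intervalIntegral_pos_of_pos_on
    (gauss_integrable μs σs hσ).intervalIntegrable (fun t _ => ?_) hab
  have : 0 < Real.sqrt (2 * Real.pi) := Real.sqrt_pos.mpr (by positivity)
  positivity

lemma xdiff_bound (a b e : ℝ) (ha : 0 ≤ a) (hb : 0 ≤ b) (he : 0 < e)
    (f f' : ℝ) (hf : 0 ≤ f) (hf' : 0 ≤ f') :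
    |a / (b * f + e) - a / (b * f' + e)| ≤ a * b / e ^ 2 * |f - f'| := by
  have h1 : 0 < b * f + e := by positivity
  have h2 : 0 < b * f' + e := by positivity
  have heq : a / (b * f + e) - a / (b * f' + e) =
      a * b * (f' - f) / ((b * f + e) * (b * f' + e)) := by
    field_simp; ring
  rw [heq, abs_div, abs_of_pos (mul_pos h1 h2), abs_mul, abs_mul, abs_of_nonneg ha,
    abs_of_nonneg hb, abs_sub_comm f' f]
  have hle : e ^ 2 ≤ (b * f + e) * (b * f' + e) := by
    nlinarith [mul_nonneg hb hf, mul_nonneg hb hf',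
      mul_nonneg (mul_nonneg hb hf) (mul_nonneg hb hf'), he.le]
  calc a * b * |f - f'| / ((b * f + e) * (b * f' + e))
      ≤ a * b * |f - f'| / e ^ 2 := by
        gcongr
    _ = a * b / e ^ 2 * |f - f'| := by ring

theorem stmt4 (B F c ρ ν dmax : ℝ) (m : ℕ)
    (hB : 0 < B) (hF : 0 < F) (hc : 0 < c) (hρ : 0 < ρ) (hν : 0 < ν) (hd : 0 < dmax)
    (hm : 0 < m) (μs σs sa sb : ℝ) (hσ : 0 < σs) (hsa : 0 < sa) (hab : sa < sb)
    (R : ℝ) (hR : 0 ≤ R) :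
    ∀ f ∈ Set.Icc (0 : ℝ) 1, ∀ f' ∈ Set.Icc (0 : ℝ) 1,
      |Qfun B F c ρ ν dmax m μs σs sa sb R f - Qfun B F c ρ ν dmax m μs σs sa sb R f'| ≤
        (1 / (Real.sqrt (2 * Real.pi) * σs * (normCDF μs σs sb - normCDF μs σs sa))) *
          (m * dmax * F * B * R * (c * B * R + F) / (ρ * ν * F) ^ 2) * |f - f'| := by
  intro f hf f' hf'
  set Z := normCDF μs σs sb - normCDF μs σs sa with hZ
  have hZpos : 0 < Z := normCDF_Zpos μs σs sa sb hσ hab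
  set a := dmax * F * B * R with haa
  set b := (m : ℝ) * (c * B * R + F) with hbb
  set e := ρ * ν * F with hee
  have ha : 0 ≤ a := by positivity
  have hb : 0 ≤ b := by positivity
  have he : 0 < e := by positivity
  have hmpos : (0:ℝ) < m := Nat.cast_pos.mpr hm
  have hxeq : ∀ g : ℝ, xfun B F c ρ ν dmax m R g = a / (b * g + e) := by
    intro g
    simp only [xfun, haa, hbb, hee]
    ring_nf
  have hxd : |xfun B F c ρ ν dmax m R f - xfun B F c ρ ν dmax m R f'| ≤
      a * b / e ^ 2 * |f - f'| := by
    rw [hxeq f, hxeq f']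
    exact xdiff_bound a b e ha hb he f f' hf.1 hf'.1
  have hQ : Qfun B F c ρ ν dmax m μs σs sa sb R f - Qfun B F c ρ ν dmax m μs σs sa sb R f' =
      (normCDF μs σs (xfun B F c ρ ν dmax m R f) -
        normCDF μs σs (xfun B F c ρ ν dmax m R f')) / Z := by
    simp only [Qfun, ← hZ]
    field_simp
    ring
  rw [hQ, abs_div, abs_of_pos hZpos]
  have hsqrt : 0 < Real.sqrt (2 * Real.pi) := Real.sqrt_pos.mpr (by positivity)
  have hlip := normCDF_lip μs σs hσ (xfun B F c ρ ν dmax m R f') (xfun B F c ρ ν dmax m R f)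
  have hchain : |normCDF μs σs (xfun B F c ρ ν dmax m R f) -
      normCDF μs σs (xfun B F c ρ ν dmax m R f')| ≤
      (1 / (Real.sqrt (2 * Real.pi) * σs)) * (a * b / e ^ 2 * |f - f'|) := by
    refine hlip.trans ?_
    exact mul_le_mul_of_nonneg_left hxd (by positivity)
  rw [div_le_iff₀ hZpos]
  refine hchain.trans (le_of_eq ?_)
  have hnum : (m : ℝ) * dmax * F * B * R * (c * B * R + F) = a * b := by
    rw [haa, hbb]; ring
  rw [hnum, hee]
  field_simp
end

section
/- For every R ≥ 0, the clamped success probability f ↦ Q̃(R,f) is monotone nonincreasing on [0,∞). -/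
open Real MeasureTheory Set

/-- The clamped success probability. -/
noncomputable def Qtilde (B F c ρ ν dmax : ℝ) (m : ℕ) (μs σs sa sb : ℝ) (R f : ℝ) : ℝ :=
  max 0 (min 1 (Qfun B F c ρ ν dmax m μs σs sa sb R f))

lemma normCDF_mono (μs σs : ℝ) (hσ : 0 < σs) : Monotone (normCDF μs σs) := by
  intro y1 y2 h
  apply setIntegral_mono_set (gauss_integrable μs σs hσ).integrableOn
  · filter_upwards with t
    positivity
  · exact HasSubset.Subset.eventuallyLE (Set.Iic_subset_Iic.mpr h)

lemma normCDF_strict (μs σs : ℝ) (hσ : 0 < σs) {sa sb : ℝ} (hab : sa < sb) :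
    normCDF μs σs sa < normCDF μs σs sb := by
  set g : ℝ → ℝ := fun t => (1 / (Real.sqrt (2 * Real.pi) * σs)) *
      Real.exp (-(t - μs) ^ 2 / (2 * σs ^ 2)) with hg
  have hint := gauss_integrable μs σs hσ
  have hsplit : (Set.Iic sb) = Set.Iic sa ∪ Set.Ioc sa sb :=
    (Set.Iic_union_Ioc_eq_Iic hab.le).symm
  have hdisj : Disjoint (Set.Iic sa) (Set.Ioc sa sb) := by
    apply Set.disjoint_left.mpr
    intro t ht ht'
    exact absurd ht' (by simp [Set.mem_Ioc]; intro h; linarith [Set.mem_Iic.mp ht])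
  have heq : normCDF μs σs sb = normCDF μs σs sa + ∫ t in Set.Ioc sa sb, g t := by
    unfold normCDF
    rw [hsplit, setIntegral_union hdisj measurableSet_Ioc hint.integrableOn hint.integrableOn]
  have hpos : 0 < ∫ t in Set.Ioc sa sb, g t := by
    rw [setIntegral_pos_iff_support_of_nonneg_ae ?_ hint.integrableOn]
    · have hsupp : Function.support g = Set.univ := by
        ext t
        simp only [Function.mem_support, Set.mem_univ, iff_true]
        have : 0 < g t := by rw [hg]; positivity
        exact ne_of_gt this
      rw [hsupp, Set.univ_inter, Real.volume_Ioc]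
      simpa using sub_pos.mpr hab
    · filter_upwards with t
      show (0:ℝ) ≤ _
      positivity
  rw [heq]
  linarith

theorem stmt8 (B F c ρ ν dmax : ℝ) (m : ℕ)
    (hB : 0 < B) (hF : 0 < F) (hc : 0 < c) (hρ : 0 < ρ) (hν : 0 < ν) (hd : 0 < dmax)
    (hm : 0 < m) (μs σs sa sb : ℝ) (hσ : 0 < σs) (hsa : 0 < sa) (hab : sa < sb)
    (R : ℝ) (hR : 0 ≤ R) :
    AntitoneOn (fun f => Qtilde B F c ρ ν dmax m μs σs sa sb R f) (Set.Ici 0) := by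
  intro f1 hf1 f2 hf2 h12
  simp only [Set.mem_Ici] at hf1 hf2
  have hZ : 0 < normCDF μs σs sb - normCDF μs σs sa :=
    sub_pos.mpr (normCDF_strict μs σs hσ hab)
  have hmR : (0:ℝ) < m := Nat.cast_pos.mpr hm
  have hk : 0 < c * B * R + F := by positivity
  have hD1 : 0 < (m:ℝ) * f1 * (c * B * R + F) + ρ * ν * F := by positivity
  have hD12 : (m:ℝ) * f1 * (c * B * R + F) + ρ * ν * F ≤
      (m:ℝ) * f2 * (c * B * R + F) + ρ * ν * F := by gcongr
  have hx : xfun B F c ρ ν dmax m R f2 ≤ xfun B F c ρ ν dmax m R f1 := by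
    unfold xfun
    apply div_le_div_of_nonneg_left (by positivity) hD1 hD12
  have hQ : Qfun B F c ρ ν dmax m μs σs sa sb R f2 ≤
      Qfun B F c ρ ν dmax m μs σs sa sb R f1 := by
    unfold Qfun
    gcongr
    exact normCDF_mono μs σs hσ hx
  unfold Qtilde
  exact max_le_max le_rfl (min_le_min le_rfl hQ)
end
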